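/- arXiv:math/0211021 — 2 statements merged into one kernel-verified Lean document; each statement's English description precedes it below -/
import Mathlib

section
/- Let F : ℂ → ℂ be holomorphic on the open unit disk and continuous on the closed disk, with power series F(z) = Σ_{ℓ≥0} a_ℓ z^ℓ. If the boundary values satisfy F(e^{iθ}) = e^{iθ} · conj(F(e^{iθ})) for all θ, then F(z) = a₀ + conj(a₀) z; i.e., F is the affine function z ↦ a + ā z with a = a₀. -/
open Complex Metric MeasureTheory

private lemma my_interval_integral_conj (f : ℝ → ℂ) (a b : ℝ) :
    (∫ x in a..b, (starRingEnd ℂ) (f x)) = (starRingEnd ℂ) (∫ x in a..b, f x) := by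
  unfold intervalIntegral
  rw [integral_conj, integral_conj, map_sub]

/-- **Holomorphic disks with boundary on the Möbius band are affine.**
Let `F` be holomorphic on the open unit disk and continuous on the closed disk.
If the boundary values satisfy `F(e^{iθ}) = e^{iθ} · conj(F(e^{iθ}))` for all `θ`,
then `F(z) = a₀ + conj(a₀) z` where `a₀ = F(0)`. -/
theorem boundary_condition_forces_affine (F : ℂ → ℂ)
    (h1 : DifferentiableOn ℂ F (Metric.ball 0 1))
    (h2 : ContinuousOn F (Metric.closedBall 0 1))
    (hb : ∀ θ : ℝ,
      F (Complex.exp (θ * Complex.I)) =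
        Complex.exp (θ * Complex.I) * (starRingEnd ℂ) (F (Complex.exp (θ * Complex.I)))) :
    ∀ z ∈ Metric.closedBall (0 : ℂ) 1, F z = F 0 + (starRingEnd ℂ) (F 0) * z := by
  set e : ℝ → ℂ := fun θ => Complex.exp (θ * Complex.I) with he
  have hene : ∀ θ : ℝ, e θ ≠ 0 := fun θ => Complex.exp_ne_zero _
  have hcirc : ∀ θ : ℝ, circleMap 0 1 θ = e θ := by
    intro θ; simp [circleMap, he]
  have hconj_e : ∀ θ : ℝ, (starRingEnd ℂ) (e θ) = (e θ)⁻¹ := by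
    intro θ
    rw [he]
    simp only
    rw [← Complex.exp_conj, ← Complex.exp_neg]
    congr 1
    simp
  -- power series
  have hDC : DiffContOnCl ℂ F (ball (0:ℂ) 1) := by
    refine ⟨h1, ?_⟩
    rwa [closure_ball (0:ℂ) one_ne_zero]
  have hps : HasFPowerSeriesOnBall F (cauchyPowerSeries F 0 1) 0 1 := by
    have := hDC.hasFPowerSeriesOnBall (R := 1) one_pos
    simpa using this
  set p := cauchyPowerSeries F 0 1 with hp
  -- Cauchy: nonnegative-power integrals vanish
  have hO : ∀ k : ℕ, (∮ z in C(0, 1), z ^ k * F z) = 0 := by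
    intro k
    refine Complex.circleIntegral_eq_zero_of_differentiable_on_off_countable
      zero_le_one Set.countable_empty ((continuous_pow k).continuousOn.mul h2) ?_
    intro z hz
    exact (differentiableAt_pow k).mul (h1.differentiableAt (isOpen_ball.mem_nhds hz.1))
  have hJ : ∀ k : ℕ, (∫ θ in (0:ℝ)..2 * Real.pi, (e θ) ^ (k + 1) * F (e θ)) = 0 := by
    intro k
    have h0 := hO k
    rw [circleIntegral] at h0
    simp only [deriv_circleMap, hcirc, smul_eq_mul] at h0
    have h1' : (∫ θ in (0:ℝ)..2 * Real.pi, (e θ * Complex.I) * ((e θ) ^ k * F (e θ)))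
        = Complex.I * ∫ θ in (0:ℝ)..2 * Real.pi, (e θ) ^ (k + 1) * F (e θ) := by
      rw [← intervalIntegral.integral_const_mul]
      congr 1; funext θ; ring
    rw [h1'] at h0
    exact (mul_eq_zero.1 h0).resolve_left Complex.I_ne_zero
  -- the basic integrals
  set Q : ℕ → ℂ := fun n => ∫ θ in (0:ℝ)..2 * Real.pi, ((e θ) ^ n)⁻¹ * F (e θ) with hQdef
  have hQsucc : ∀ n : ℕ,
      Q (n + 1) = (starRingEnd ℂ) (∫ θ in (0:ℝ)..2 * Real.pi, (e θ) ^ n * F (e θ)) := by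
    intro n
    rw [hQdef, ← my_interval_integral_conj]
    simp only
    congr 1
    funext θ
    rw [map_mul, map_pow, hconj_e]
    conv_lhs => rw [hb θ]
    have h := hene θ
    field_simp
    exact (by rw [one_div, inv_pow, pow_succ, mul_comm (e θ ^ n) (e θ), mul_assoc (e θ), mul_inv_cancel₀ (pow_ne_zero n h), mul_one] : e θ ^ (n + 1) * (1 / e θ) ^ n * (starRingEnd ℂ) (F (e θ)) = e θ * (starRingEnd ℂ) (F (e θ))).symm
  have hQ0 : Q 0 = ∫ θ in (0:ℝ)..2 * Real.pi, F (e θ) := by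
    simp [hQdef]
  -- coefficient formula
  have hc' : (2 * (Real.pi:ℂ) * Complex.I)⁻¹ * Complex.I = (((2 * Real.pi : ℝ)):ℂ)⁻¹ := by
    have hπ : (Real.pi:ℂ) ≠ 0 := by exact_mod_cast Real.pi_ne_zero
    push_cast
    field_simp
  have hcoef : ∀ (n : ℕ) (z : ℂ),
      (p n fun _ => z) = (((2 * Real.pi : ℝ)):ℂ)⁻¹ * (z ^ n * Q n) := by
    intro n z
    rw [hp, cauchyPowerSeries_apply, circleIntegral]
    simp only [deriv_circleMap, hcirc, smul_eq_mul, sub_zero]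
    have h1' : (∫ θ in (0:ℝ)..2 * Real.pi,
          (e θ * Complex.I) * ((z / e θ) ^ n * ((e θ)⁻¹ * F (e θ))))
        = Complex.I * (z ^ n * Q n) := by
      rw [hQdef]
      simp only
      rw [← intervalIntegral.integral_const_mul, ← intervalIntegral.integral_const_mul]
      congr 1
      funext θ
      have h := hene θ
      field_simp
      rw [div_pow, mul_right_comm, div_mul_cancel₀ _ (pow_ne_zero n h), mul_comm]
    rw [h1', ← mul_assoc, hc']
  -- vanishing of higher coefficients
  have hvanish : ∀ (n : ℕ) (z : ℂ), (p (n + 2) fun _ => z) = 0 := by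
    intro n z
    rw [hcoef]
    have : Q (n + 2) = 0 := by
      rw [hQsucc (n + 1), hJ n]
      simp
    rw [this, mul_zero, mul_zero]
  -- a₀ = F 0
  have ha0 : ∀ z : ℂ, (p 0 fun _ => z) = F 0 := by
    intro z
    have := hps.coeff_zero (fun _ => z)
    simpa using this
  have hF0 : F 0 = (((2 * Real.pi : ℝ)):ℂ)⁻¹ * Q 0 := by
    rw [← ha0 0, hcoef]
    simp
  -- a₁ = conj a₀
  have ha1 : ∀ z : ℂ, (p 1 fun _ => z) = (starRingEnd ℂ) (F 0) * z := by
    intro z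
    rw [hcoef, hF0]
    have hQ1 : Q 1 = (starRingEnd ℂ) (Q 0) := by
      rw [hQsucc 0, hQ0]
      congr 1
      congr 1
      funext θ
      simp
    rw [hQ1, map_mul, map_inv₀]
    rw [Complex.conj_ofReal]
    ring
  -- sum on the open ball
  have key : ∀ z ∈ ball (0:ℂ) 1, F z = F 0 + (starRingEnd ℂ) (F 0) * z := by
    intro z hz
    have hzz : z ∈ Metric.eball (0:ℂ) 1 := by
      rw [mem_ball, dist_zero_right] at hz
      rw [Metric.mem_eball, edist_zero_right]
      rw [← ofReal_norm]
      exact ENNReal.ofReal_lt_one.mpr hz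
    have hsum := hps.hasSum hzz
    simp only [zero_add] at hsum
    have hsum2 : HasSum (fun n => p n fun _ => z) (F 0 + (starRingEnd ℂ) (F 0) * z) := by
      have hne : ∀ n ∉ Finset.range 2, (p n fun _ => z) = 0 := by
        intro n hn
        simp only [Finset.mem_range, not_lt] at hn
        obtain ⟨m, rfl⟩ := Nat.exists_eq_add_of_le hn
        rw [add_comm]
        exact hvanish m z
      have := hasSum_sum_of_ne_finset_zero (L := SummationFilter.unconditional ℕ) (s := Finset.range 2)
        (f := fun n => p n fun _ => z) hne
      rwa [Finset.sum_range_succ, Finset.sum_range_one, ha0, ha1] at this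
    exact hsum.unique hsum2
  -- extend to the closed ball by continuity
  intro z hz
  have hg : ContinuousOn (fun w : ℂ => F 0 + (starRingEnd ℂ) (F 0) * w) (closedBall (0:ℂ) 1) :=
    (continuous_const.add (continuous_const.mul continuous_id)).continuousOn
  have := Set.EqOn.of_subset_closure (t := closedBall (0:ℂ) 1) key h2 hg ball_subset_closedBall
    (by rw [closure_ball (0:ℂ) one_ne_zero])
  exact this hz
end

section
/- If two torsion-free connections on a surface are related by ∇̂_u v = ∇_u v + du(u)v + du(v)u + h(u,v) grad_h u (conformal change of Levi-Civita connection) and also by ∇̂_u v = ∇_u v + β(u)v + β(v)u (projective change) for a 1-form β, then β = du and grad_h u = 0; hence u is locally constant. -/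
open RealInnerProductSpace

/-- **Conformal + projective change forces a constant conformal factor** (pointwise,
on a 2-dimensional tangent space).  If the difference tensor of two torsion-free
connections has both the conformal form `du(u)v + du(v)u + h(u,v)·grad u`
(difference of Levi-Civita connections of `h` and `e^{2u}h` in dimension 2, where
`D = du` and `G = grad_h u` with `D v = ⟪G, v⟫`) and the projective form
`β(u)v + β(v)u`, then `β = du` and `grad_h u = 0` (so `du = 0`); hence `u` is
locally constant. -/
theorem conformal_and_projective_implies_constant
    {E : Type*} [NormedAddCommGroup E] [InnerProductSpace ℝ E]
    (hdim : Module.finrank ℝ E = 2)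
    (β D : E →ₗ[ℝ] ℝ) (G : E)
    (hgrad : ∀ v, D v = ⟪G, v⟫)
    (h : ∀ v w : E, β v • w + β w • v = D v • w + D w • v + ⟪v, w⟫ • G) :
    β = D ∧ D = 0 ∧ G = 0 := by
  have : FiniteDimensional ℝ E := FiniteDimensional.of_finrank_eq_succ hdim
  set b := stdOrthonormalBasis ℝ E with hb
  have h01 : (0 : ℕ) < Module.finrank ℝ E := by omega
  have h11 : (1 : ℕ) < Module.finrank ℝ E := by omega
  set i0 : Fin (Module.finrank ℝ E) := ⟨0, h01⟩
  set i1 : Fin (Module.finrank ℝ E) := ⟨1, h11⟩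
  have hi : i0 ≠ i1 := by
    intro hc
    have := congrArg Fin.val hc
    simp [i0, i1] at this
  set e1 := b i0 with he1
  set e2 := b i1 with he2
  have hon := orthonormal_iff_ite.mp b.orthonormal
  have h11' : ⟪e1, e1⟫ = 1 := (hon i0 i0).trans (if_pos rfl)
  have h22 : ⟪e2, e2⟫ = 1 := (hon i1 i1).trans (if_pos rfl)
  have h12 : ⟪e1, e2⟫ = 0 := (hon i0 i1).trans (if_neg hi)
  have h21 : ⟪e2, e1⟫ = 0 := (hon i1 i0).trans (if_neg hi.symm)
  have key : ∀ v : E, ⟪v, v⟫ • G = ((2 : ℝ) * (β v - D v)) • v := by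
    intro v
    have hv := h v v
    have : ⟪v, v⟫ • G = (β v • v + β v • v) - (D v • v + D v • v) := by
      rw [hv]; abel
    rw [this]; module
  have hG1 : G = ((2 : ℝ) * (β e1 - D e1)) • e1 := by
    have := key e1; rwa [h11', one_smul] at this
  have hG2 : G = ((2 : ℝ) * (β e2 - D e2)) • e2 := by
    have := key e2; rwa [h22, one_smul] at this
  have ha : β e1 - D e1 = 0 := by
    have t1 : ⟪e1, G⟫ = 2 * (β e1 - D e1) := by
      rw [hG1, real_inner_smul_right, h11']; ring
    have t2 : ⟪e1, G⟫ = 0 := by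
      rw [hG2, real_inner_smul_right, h12]; ring
    rw [t2] at t1; linarith
  have hG0 : G = 0 := by rw [hG1, ha]; simp
  have he1ne : e1 ≠ 0 := by
    intro hc
    rw [hc, inner_zero_left] at h11'
    norm_num at h11'
  have hβD : ∀ v, β v = D v := by
    intro v
    have hv := h v e1
    rw [hG0, smul_zero, add_zero] at hv
    have hβe1 : β e1 = D e1 := by linarith [ha]
    have : (β v - D v) • e1 = 0 := by
      have : β v • e1 + β e1 • v - (D v • e1 + D e1 • v) = 0 := by
        rw [hv]; abel
      rw [hβe1] at this
      calc (β v - D v) • e1 = β v • e1 + D e1 • v - (D v • e1 + D e1 • v) := by module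
        _ = 0 := this
    rcases smul_eq_zero.mp this with hc | hc
    · linarith [sub_eq_zero.mp (by linarith : β v - D v = 0)]
    · exact absurd hc he1ne
  have hβ : β = D := LinearMap.ext hβD
  have hD : D = 0 := by
    apply LinearMap.ext
    intro v
    rw [hgrad, hG0, inner_zero_left]
    rfl
  exact ⟨hβ, hD, hG0⟩
end
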